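/- Let f ∈ C¹(ℝⁿ, ℝⁿ), x_e an equilibrium (f(x_e) = 0), U a compact neighborhood of x_e, and L : U → ℝ a C¹ function with L(x_e) = 0, L(x) > 0 for x ∈ U \ {x_e}, and ∇L(x)·f(x) ≤ 0 on U. Let E = {x ∈ U : ∇L(x)·f(x) = 0} and M the largest invariant set of the flow contained in E. Then there is a neighborhood V ⊆ U of x_e such that for every x ∈ V, the ω-limit set ω(x) of the flow of ẋ = f(x) is contained in M. -/

import Mathlib

open RealInnerProductSpace Filter

open Set Metric Real in
/-- Uniqueness of global solutions to an ODE with `C¹` right-hand side. -/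
lemma my_flow_unique {E : Type*} [NormedAddCommGroup E] [NormedSpace ℝ E]
    {f : E → E} (hf : ContDiff ℝ 1 f) {α β : ℝ → E}
    (hα : ∀ t, HasDerivAt α (f (α t)) t) (hβ : ∀ t, HasDerivAt β (f (β t)) t)
    {t0 : ℝ} (h : α t0 = β t0) : α = β := by
  have hcα : Continuous α := continuous_iff_continuousAt.2 fun t => (hα t).continuousAt
  have hcβ : Continuous β := continuous_iff_continuousAt.2 fun t => (hβ t).continuousAt
  set S := {t : ℝ | α t = β t} with hS
  have hSc : IsClosed S := isClosed_eq hcα hcβ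
  have hSo : IsOpen S := by
    rw [isOpen_iff_mem_nhds]
    intro t1 ht1
    obtain ⟨K, s, hs, hK⟩ := hf.contDiffAt.exists_lipschitzOnWith (x := α t1)
    have hαs : ∀ᶠ t in nhds t1, α t ∈ s := hcα.continuousAt.preimage_mem_nhds hs
    have hβs : ∀ᶠ t in nhds t1, β t ∈ s := by
      apply hcβ.continuousAt.preimage_mem_nhds
      rwa [← (ht1 : α t1 = β t1)]
    have heq : α =ᶠ[nhds t1] β :=
      ODE_solution_unique_of_eventually (v := fun _ : ℝ => f) (s := fun _ => s)
        (Eventually.of_forall fun _ => hK)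
        (hαs.mono fun t ht => ⟨hα t, ht⟩)
        (hβs.mono fun t ht => ⟨hβ t, ht⟩) ht1
    exact heq
  have : S = Set.univ := by
    rcases isClopen_iff.mp ⟨hSc, hSo⟩ with h' | h'
    · exact absurd h' (Set.nonempty_iff_ne_empty.mp ⟨t0, h⟩)
    · exact h'
  funext t
  have : t ∈ S := this ▸ Set.mem_univ t
  exact this

open Set Metric Real in
/-- Bootstrap lemma: a limit of solutions staying in a small closed ball stays in the ball,
and the convergence propagates along the time interval. -/
lemma my_boot {E : Type*} [NormedAddCommGroup E] [NormedSpace ℝ E]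
    {v : E → E} {K : NNReal} {p : E} {ε ε' T : ℝ} (hεε' : ε < ε')
    (hlip : LipschitzOnWith K v (closedBall p ε'))
    {g : ℝ → E} {gk : ℕ → ℝ → E}
    (hg : ∀ r, HasDerivAt g (v (g r)) r)
    (hgk : ∀ k r, HasDerivAt (gk k) (v (gk k r)) r)
    (hmem : ∀ k, ∀ r ∈ Icc (0:ℝ) T, gk k r ∈ closedBall p ε)
    (h0 : Tendsto (fun k => gk k 0) atTop (nhds (g 0))) :
    ∀ r ∈ Icc (0:ℝ) T, g r ∈ closedBall p ε ∧
      Tendsto (fun k => gk k r) atTop (nhds (g r)) := by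
  have hsub : closedBall p ε ⊆ closedBall p ε' := closedBall_subset_closedBall hεε'.le
  have key : ∀ s ∈ Icc (0:ℝ) T, (∀ r ∈ Icc (0:ℝ) s, g r ∈ closedBall p ε') →
      ∀ r ∈ Icc (0:ℝ) s, g r ∈ closedBall p ε ∧
        Tendsto (fun k => gk k r) atTop (nhds (g r)) := by
    intro s hs hball r hr
    have hdist : ∀ k, dist (gk k r) (g r) ≤ dist (gk k 0) (g 0) * exp (K * (r - 0)) := by
      intro k
      refine dist_le_of_trajectories_ODE_of_mem (v := fun _ => v)
        (s := fun _ => closedBall p ε') (a := 0) (b := s) (fun _ _ => hlip)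
        (fun t _ => (hgk k t).continuousAt.continuousWithinAt)
        (fun t _ => (hgk k t).hasDerivWithinAt)
        (fun t ht => hsub (hmem k t ⟨ht.1, ht.2.le.trans hs.2⟩))
        (fun t _ => (hg t).continuousAt.continuousWithinAt)
        (fun t _ => (hg t).hasDerivWithinAt)
        (fun t ht => hball t ⟨ht.1, ht.2.le⟩)
        le_rfl r hr
    have hlim0 : Tendsto (fun k => dist (gk k 0) (g 0) * exp (K * (r - 0))) atTop (nhds 0) := by
      simpa using (tendsto_iff_dist_tendsto_zero.mp h0).mul_const (exp (K * (r - 0)))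
    have htend : Tendsto (fun k => gk k r) atTop (nhds (g r)) :=
      tendsto_iff_dist_tendsto_zero.mpr (squeeze_zero (fun _ => dist_nonneg) hdist hlim0)
    exact ⟨Metric.isClosed_closedBall.mem_of_tendsto htend
      (Eventually.of_forall fun k => hmem k r ⟨hr.1, hr.2.trans hs.2⟩), htend⟩
  intro r hr
  have hT : (0:ℝ) ≤ T := hr.1.trans hr.2
  by_cases hmain : ∀ r' ∈ Icc (0:ℝ) T, g r' ∈ closedBall p ε'
  · exact key T ⟨hT, le_rfl⟩ hmain r hr
  exfalso
  push_neg at hmain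
  obtain ⟨t1, ht1, hnot⟩ := hmain
  set Bad := {t : ℝ | t ∈ Icc (0:ℝ) T ∧ g t ∉ closedBall p ε'} with hBad
  have hne : Bad.Nonempty := ⟨t1, ht1, hnot⟩
  have hbdd : BddBelow Bad := ⟨0, fun t ht => ht.1.1⟩
  set T0 := sInf Bad with hT0def
  have hclos : T0 ∈ closure Bad := csInf_mem_closure hne hbdd
  have hgc : Continuous g := continuous_iff_continuousAt.mpr fun t => (hg t).continuousAt
  have hsubc : closure Bad ⊆ Icc (0:ℝ) T ∩ {t : ℝ | ε' ≤ dist (g t) p} := by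
    apply closure_minimal
    · intro t ht
      exact ⟨ht.1, le_of_lt (by simpa [Metric.mem_closedBall, not_le] using ht.2)⟩
    · exact IsClosed.inter isClosed_Icc
        (isClosed_le continuous_const (hgc.dist continuous_const))
  obtain ⟨hT0Icc, hT0far⟩ := hsubc hclos
  have hlt : ∀ t, t ∈ Icc (0:ℝ) T → t < T0 → g t ∈ closedBall p ε' := by
    intro t ht hlt'
    by_contra hn
    exact absurd (csInf_le hbdd ⟨ht, hn⟩) (not_le.mpr hlt')
  have hballT0 : ∀ t ∈ Icc (0:ℝ) T0, g t ∈ closedBall p ε' := by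
    intro t ht
    rcases ht.2.lt_or_eq with h | h
    · exact hlt t ⟨ht.1, ht.2.trans hT0Icc.2⟩ h
    rw [h]
    rcases eq_or_lt_of_le hT0Icc.1 with hz0 | hz0
    · have hg0 : g T0 ∈ closedBall p ε := by
        rw [← hz0]
        exact Metric.isClosed_closedBall.mem_of_tendsto h0
          (Eventually.of_forall fun k => hmem k 0 ⟨le_rfl, hT⟩)
      exact hsub hg0
    · have hcw : ContinuousWithinAt g (Ico (0:ℝ) T0) T0 := hgc.continuousWithinAt
      have hmc : T0 ∈ closure (Ico (0:ℝ) T0) := by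
        rw [closure_Ico hz0.ne]
        exact ⟨hT0Icc.1, le_rfl⟩
      have hmemc := hcw.mem_closure_image hmc
      refine closure_minimal ?_ Metric.isClosed_closedBall hmemc
      rintro _ ⟨t', ht', rfl⟩
      exact hlt t' ⟨ht'.1, ht'.2.le.trans hT0Icc.2⟩ ht'.2
  have hfin := (key T0 hT0Icc hballT0 T0 ⟨hT0Icc.1, le_rfl⟩).1
  rw [Metric.mem_closedBall] at hfin
  have hfar : ε' ≤ dist (g T0) p := hT0far
  linarith

/-- local LaSalle invariance theorem: Let `f` be `C¹`, `x_e` an equilibrium,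
`U` a compact neighborhood of `x_e`, and `L` a `C¹` Lyapunov function on `U` with
`L(x_e) = 0`, `L > 0` on `U \ {x_e}` and `∇L·f ≤ 0` on `U`. Let
`E = {x ∈ U : ∇L(x)·f(x) = 0}` and `M` the largest invariant set of the flow `φ` of `f`
contained in `E`. Assuming solutions starting near `x_e` stay in `U` for all `t ≥ 0`,
there is a neighborhood `V ⊆ U` of `x_e` such that for every `x ∈ V` the ω-limit set
of `x` is contained in `M`. -/
theorem local_lasalle_invariance
    (n : ℕ) (f : EuclideanSpace ℝ (Fin n) → EuclideanSpace ℝ (Fin n))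
    (hf : ContDiff ℝ 1 f)
    (xe : EuclideanSpace ℝ (Fin n)) (hxe : f xe = 0)
    (U : Set (EuclideanSpace ℝ (Fin n))) (hUcomp : IsCompact U) (hUnhds : U ∈ nhds xe)
    (L : EuclideanSpace ℝ (Fin n) → ℝ) (hL : ContDiffOn ℝ 1 L U)
    (hL0 : L xe = 0) (hLpos : ∀ x ∈ U, x ≠ xe → 0 < L x)
    (hLdec : ∀ x ∈ U, ⟪gradient L x, f x⟫ ≤ 0)
    (φ : ℝ → EuclideanSpace ℝ (Fin n) → EuclideanSpace ℝ (Fin n))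
    (hφ0 : ∀ x, φ 0 x = x)
    (hφflow : ∀ x t, HasDerivAt (fun s => φ s x) (f (φ t x)) t)
    (hstay : ∃ W ∈ nhds xe, ∀ x ∈ W, ∀ t ≥ (0 : ℝ), φ t x ∈ U)
    (Eset : Set (EuclideanSpace ℝ (Fin n)))
    (hEset : Eset = {x ∈ U | ⟪gradient L x, f x⟫ = 0})
    (M : Set (EuclideanSpace ℝ (Fin n)))
    (hM : M = ⋃₀ {S | S ⊆ Eset ∧ ∀ x ∈ S, ∀ t : ℝ, φ t x ∈ S}) :
    ∃ V ∈ nhds xe, V ⊆ U ∧ ∀ x ∈ V,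
      {y | ∃ u : ℕ → ℝ, Tendsto u atTop atTop ∧
        Tendsto (fun k => φ (u k) x) atTop (nhds y)} ⊆ M := by
  classical
  -- group law for the flow
  have hshift : ∀ (z : EuclideanSpace ℝ (Fin n)) (a r : ℝ),
      HasDerivAt (fun s => φ (a + s) z) (f (φ (a + r) z)) r := by
    intro z a r
    have h2 : HasDerivAt (fun s : ℝ => a + s) 1 r := by
      simpa using (hasDerivAt_id r).const_add a
    have := (hφflow z (a + r)).scomp r h2
    simpa [Function.comp_def] using this
  have hneg : ∀ (z : EuclideanSpace ℝ (Fin n)) (a r : ℝ),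
      HasDerivAt (fun s => φ (a - s) z) (-f (φ (a - r) z)) r := by
    intro z a r
    have h2 : HasDerivAt (fun s : ℝ => a - s) (-1) r := by
      simpa using (hasDerivAt_id r).const_sub a
    have := (hφflow z (a - r)).scomp r h2
    simpa [Function.comp_def] using this
  have hgroup : ∀ (z : EuclideanSpace ℝ (Fin n)) (s t : ℝ), φ s (φ t z) = φ (t + s) z := by
    intro z s t
    have h := my_flow_unique hf (α := fun s => φ s (φ t z)) (β := fun s => φ (t + s) z)
      (fun r => hφflow (φ t z) r) (fun r => hshift z t r)
      (t0 := 0) (by show φ 0 (φ t z) = φ (t + 0) z; rw [hφ0, add_zero])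
    exact congrFun h s
  -- geometry near `xe`
  have hio : interior U ∈ nhds xe := interior_mem_nhds.mpr hUnhds
  obtain ⟨ε', hε'pos, hB'⟩ := Metric.nhds_basis_closedBall.mem_iff.mp hio
  set ε : ℝ := ε' / 2 with hεdef
  have hε : 0 < ε := by positivity
  have hεε' : ε < ε' := by
    rw [hεdef]; linarith
  have hxeint : xe ∈ interior U := mem_interior_iff_mem_nhds.mpr hUnhds
  have hLcont : ∀ p ∈ interior U, ContinuousAt L p := fun p hp =>
    ((hL.contDiffAt (mem_interior_iff_mem_nhds.mp hp)).differentiableAt one_ne_zero).continuousAt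
  -- chain rule for `L` along the flow
  have hLD : ∀ p ∈ interior U, ∀ (z : EuclideanSpace ℝ (Fin n)) (t : ℝ), φ t z = p →
      HasDerivAt (fun s => L (φ s z)) ⟪gradient L p, f p⟫ t := by
    intro p hp z t hpt
    have hdiff : DifferentiableAt ℝ L p :=
      (hL.contDiffAt (mem_interior_iff_mem_nhds.mp hp)).differentiableAt one_ne_zero
    have hgrad : HasFDerivAt L ((InnerProductSpace.toDual ℝ (EuclideanSpace ℝ (Fin n))) (gradient L p) : EuclideanSpace ℝ (Fin n) →L[ℝ] ℝ) p :=
      hasGradientAt_iff_hasFDerivAt.mp hdiff.hasGradientAt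
    rw [← hpt] at hgrad
    have h := hgrad.comp_hasDerivAt t (hφflow z t)
    simpa [hpt, Function.comp_def, InnerProductSpace.toDual_apply_apply] using h
  -- monotonicity of `L` along trajectories in the good ball
  have hA : ∀ (z : EuclideanSpace ℝ (Fin n)) (T : ℝ), (∀ t ∈ Set.Icc (0:ℝ) T, φ t z ∈ Metric.closedBall xe ε') →
      ∀ a ∈ Set.Icc (0:ℝ) T, ∀ b ∈ Set.Icc (0:ℝ) T, a ≤ b → L (φ b z) ≤ L (φ a z) := by
    intro z T hmem
    have hint : ∀ t ∈ Set.Icc (0:ℝ) T, φ t z ∈ interior U := fun t ht => hB' (hmem t ht)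
    have H : AntitoneOn (fun t => L (φ t z)) (Set.Icc 0 T) := by
      apply antitoneOn_of_deriv_nonpos (convex_Icc 0 T)
      · exact fun t ht => (hLD _ (hint t ht) z t rfl).continuousAt.continuousWithinAt
      · intro t ht
        rw [interior_Icc] at ht
        exact (hLD _ (hint t (Set.Ioo_subset_Icc_self ht)) z t rfl).differentiableAt.differentiableWithinAt
      · intro t ht
        rw [interior_Icc] at ht
        have hd := (hLD _ (hint t (Set.Ioo_subset_Icc_self ht)) z t rfl).deriv
        rw [hd]
        exact hLdec _ (interior_subset (hint t (Set.Ioo_subset_Icc_self ht)))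
    exact fun a ha b hb hab => H ha hb hab
  -- Lipschitz constant for `f` on the closed ball
  obtain ⟨C, hC⟩ := (isCompact_closedBall xe ε').exists_bound_of_continuousOn
    (hf.continuous_fderiv one_ne_zero).continuousOn
  have hK : LipschitzOnWith (Real.toNNReal C) f (Metric.closedBall xe ε') := by
    apply Convex.lipschitzOnWith_of_nnnorm_fderiv_le
      (fun z _ => (hf.differentiable one_ne_zero) z)
      (fun z hz => ?_) (convex_closedBall _ _)
    rw [← NNReal.coe_le_coe, coe_nnnorm, Real.coe_toNNReal']
    exact (hC z hz).trans (le_max_left _ _)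
  -- split off the degenerate case
  rcases subsingleton_or_nontrivial (EuclideanSpace ℝ (Fin n)) with hsub | hnt
  · refine ⟨U, hUnhds, Set.Subset.rfl, ?_⟩
    intro x _ y _
    have hyxe : y = xe := Subsingleton.elim y xe
    rw [hM]
    refine ⟨{xe}, ⟨?_, ?_⟩, by rw [hyxe]; exact rfl⟩
    · intro z hz
      rw [Set.mem_singleton_iff] at hz
      subst hz
      rw [hEset]
      exact ⟨mem_of_mem_nhds hUnhds, by rw [hxe, inner_zero_right]⟩
    · intro z hz t
      simpa using (Subsingleton.elim (φ t z) xe)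
  -- minimum of `L` on the sphere
  have hsne : (Metric.sphere xe ε).Nonempty := NormedSpace.sphere_nonempty.mpr hε.le
  have hsU : Metric.sphere xe ε ⊆ U := fun z hz => interior_subset <| hB' <| by
    have : dist z xe = ε := hz
    simp [Metric.mem_closedBall, this, hεε'.le]
  obtain ⟨z0, hz0s, hz0min⟩ := (isCompact_sphere xe ε).exists_isMinOn hsne
    (hL.continuousOn.mono hsU)
  set m := L z0 with hmdef
  have hz0ne : z0 ≠ xe := by
    intro h
    have : dist z0 xe = ε := hz0s
    rw [h, dist_self] at this
    exact hε.ne this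
  have hm : 0 < m := hLpos z0 (hsU hz0s) hz0ne
  -- the neighborhood `V`
  refine ⟨Metric.ball xe ε ∩ L ⁻¹' Set.Iio m, ?_, ?_, ?_⟩
  · exact Filter.inter_mem (Metric.ball_mem_nhds _ hε)
      ((hLcont xe hxeint).preimage_mem_nhds (by rw [hL0] at *; exact Iio_mem_nhds hm))
  · intro z hz
    exact interior_subset <| hB' <| Metric.closedBall_subset_closedBall hεε'.le
      (Metric.ball_subset_closedBall hz.1)
  intro x hx y hy
  obtain ⟨u, hu, huy⟩ := hy
  -- trapping: the forward orbit of `x` stays in the small ball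
  have hφc : Continuous fun t => φ t x :=
    continuous_iff_continuousAt.mpr fun t => (hφflow x t).continuousAt
  have htrap : ∀ t ≥ (0:ℝ), φ t x ∈ Metric.ball xe ε := by
    by_contra hcon
    push_neg at hcon
    obtain ⟨t1, ht1, hnot⟩ := hcon
    set Bad := {t : ℝ | 0 ≤ t ∧ φ t x ∉ Metric.ball xe ε} with hBaddef
    have hBadne : Bad.Nonempty := ⟨t1, ht1, hnot⟩
    have hbdd : BddBelow Bad := ⟨0, fun t ht => ht.1⟩
    set T0 := sInf Bad with hT0def
    have hT0cl : T0 ∈ closure Bad := csInf_mem_closure hBadne hbdd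
    have hBadsub : closure Bad ⊆ {t : ℝ | 0 ≤ t} ∩ {t : ℝ | ε ≤ dist (φ t x) xe} := by
      apply closure_minimal
      · intro t ht
        exact ⟨ht.1, not_lt.mp (by simpa [Metric.mem_ball] using ht.2)⟩
      · exact IsClosed.inter (isClosed_le continuous_const continuous_id)
          (isClosed_le continuous_const (hφc.dist continuous_const))
    obtain ⟨hT0nonneg, hT0far⟩ := hBadsub hT0cl
    have hlt : ∀ t, 0 ≤ t → t < T0 → φ t x ∈ Metric.ball xe ε := by
      intro t h0 hltT
      by_contra hn
      exact absurd (csInf_le hbdd ⟨h0, hn⟩) (not_le.mpr hltT)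
    have hT0pos : 0 < T0 := by
      rcases (show (0:ℝ) ≤ T0 from hT0nonneg).lt_or_eq with h | h
      · exact h
      · exfalso
        have : ε ≤ dist (φ T0 x) xe := hT0far
        rw [← h, hφ0] at this
        exact absurd hx.1 (not_lt.mpr this)
    have hcb : ∀ t ∈ Set.Icc (0:ℝ) T0, φ t x ∈ Metric.closedBall xe ε := by
      intro t ht
      rcases ht.2.lt_or_eq with h | h
      · exact Metric.ball_subset_closedBall (hlt t ht.1 h)
      rw [h]
      have hcw : ContinuousWithinAt (fun t => φ t x) (Set.Ico 0 T0) T0 :=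
        hφc.continuousWithinAt
      have hmc : T0 ∈ closure (Set.Ico (0:ℝ) T0) := by
        rw [closure_Ico hT0pos.ne]
        exact ⟨hT0nonneg, le_rfl⟩
      have hmemc := hcw.mem_closure_image hmc
      refine closure_minimal ?_ Metric.isClosed_closedBall hmemc
      rintro _ ⟨t', ht', rfl⟩
      exact Metric.ball_subset_closedBall (hlt t' ht'.1 ht'.2)
    have hdec := hA x T0 (fun t ht =>
        Metric.closedBall_subset_closedBall hεε'.le (hcb t ht))
      0 ⟨le_rfl, hT0nonneg⟩ T0 ⟨hT0nonneg, le_rfl⟩ hT0nonneg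
    have hsph : φ T0 x ∈ Metric.sphere xe ε := by
      have h1 : dist (φ T0 x) xe ≤ ε := hcb T0 ⟨hT0nonneg, le_rfl⟩
      exact le_antisymm h1 hT0far
    have hmin : m ≤ L (φ T0 x) := hz0min hsph
    rw [hφ0] at hdec
    have hxm : L x < m := hx.2
    linarith
  have hball : ∀ t ≥ (0:ℝ), φ t x ∈ Metric.closedBall xe ε := fun t ht =>
    Metric.ball_subset_closedBall (htrap t ht)
  have hUorbit : ∀ t ≥ (0:ℝ), φ t x ∈ U := fun t ht =>
    interior_subset <| hB' <| Metric.closedBall_subset_closedBall hεε'.le (hball t ht)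
  have hLnonneg : ∀ p ∈ U, 0 ≤ L p := by
    intro p hp
    rcases eq_or_ne p xe with h | h
    · rw [h, hL0]
    · exact (hLpos p hp h).le
  -- limit of `L` along the orbit
  set G : ℝ → ℝ := fun t => L (φ (max t 0) x) with hGdef
  have hGanti : Antitone G := by
    intro a b hab
    exact hA x (max b 0)
      (fun t ht => Metric.closedBall_subset_closedBall hεε'.le (hball t ht.1))
      (max a 0) ⟨le_max_right _ _, max_le_max hab le_rfl⟩
      (max b 0) ⟨le_max_right _ _, le_rfl⟩ (max_le_max hab le_rfl)
  have hGbdd : BddBelow (Set.range G) := by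
    refine ⟨0, ?_⟩
    rintro _ ⟨t, rfl⟩
    exact hLnonneg _ (hUorbit _ (le_max_right _ _))
  have hGlim := tendsto_atTop_ciInf hGanti hGbdd
  set el : ℝ := ⨅ t, G t with heldef
  have hglim : Tendsto (fun t => L (φ t x)) atTop (nhds el) := by
    apply hGlim.congr'
    filter_upwards [eventually_ge_atTop (0:ℝ)] with t ht
    rw [hGdef]
    simp only []
    rw [max_eq_left ht]
  -- the key convergence facts about points of the ω-limit set
  have hD : ∀ t : ℝ, φ t y ∈ Metric.closedBall xe ε ∧
      Tendsto (fun k => φ (u k + t) x) atTop (nhds (φ t y)) := by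
    intro t
    obtain ⟨N, hN⟩ := (hu.eventually (eventually_ge_atTop (max (-t) 0))).exists_forall_of_atTop
    have hNk : ∀ k : ℕ, max (-t) 0 ≤ u (k + N) := fun k => hN (k + N) (Nat.le_add_left N k)
    have hshiftseq : Tendsto (fun k => φ (u (k + N)) x) atTop (nhds y) :=
      huy.comp (tendsto_add_atTop_nat N)
    rcases le_or_gt 0 t with hpos | htneg
    · -- forward time
      have h0 : Tendsto (fun k => φ (u (k + N) + 0) x) atTop (nhds (φ 0 y)) := by
        simpa [hφ0] using hshiftseq
      have hres := my_boot (T := t) hεε' hK (fun r => hφflow y r)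
        (fun k r => hshift x (u (k + N)) r)
        (fun k r hr => hball _ (add_nonneg ((le_max_right _ _).trans (hNk k)) hr.1))
        h0 t ⟨hpos, le_rfl⟩
      refine ⟨hres.1, ?_⟩
      have := hres.2
      exact (tendsto_add_atTop_iff_nat (f := fun k => φ (u k + t) x) N).mp this
    · -- backward time: run the reversed flow
      have hlipneg : LipschitzOnWith (Real.toNNReal C) (fun z => -f z)
          (Metric.closedBall xe ε') := by
        rw [← one_mul (Real.toNNReal C)]
        exact LipschitzWith.id.neg.comp_lipschitzOnWith hK
      have hgneg : ∀ r, HasDerivAt (fun r => φ (0 - r) y) (-f (φ (0 - r) y)) r :=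
        fun r => hneg y 0 r
      have hgkneg : ∀ k r, HasDerivAt (fun r => φ (u (k + N) - r) x)
          (-f (φ (u (k + N) - r) x)) r := fun k r => hneg x (u (k + N)) r
      have hmemneg : ∀ k, ∀ r ∈ Set.Icc (0:ℝ) (-t),
          φ (u (k + N) - r) x ∈ Metric.closedBall xe ε := by
        intro k r hr
        apply hball
        have h1 : -t ≤ u (k + N) := (le_max_left _ _).trans (hNk k)
        linarith [hr.2]
      have h0 : Tendsto (fun k => φ (u (k + N) - 0) x) atTop (nhds (φ (0 - 0) y)) := by
        simpa [hφ0] using hshiftseq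
      have hres := my_boot (v := fun z => -f z) (T := -t) hεε' hlipneg hgneg hgkneg
        hmemneg h0 (-t) ⟨neg_nonneg.mpr htneg.le, le_rfl⟩
      have heq1 : (0:ℝ) - -t = t := by ring
      have heq2 : ∀ k, u (k + N) - -t = u (k + N) + t := fun k => by ring
      rw [heq1] at hres
      refine ⟨hres.1, ?_⟩
      have h2 := hres.2
      simp only [heq2] at h2
      exact (tendsto_add_atTop_iff_nat (f := fun k => φ (u k + t) x) N).mp h2
  -- `L` is constant equal to `el` on the full orbit of `y`
  have hLy : ∀ t : ℝ, L (φ t y) = el := by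
    intro t
    have hmemint : φ t y ∈ interior U :=
      hB' (Metric.closedBall_subset_closedBall hεε'.le (hD t).1)
    have h1 : Tendsto (fun k => L (φ (u k + t) x)) atTop (nhds el) :=
      hglim.comp (tendsto_atTop_add_const_right atTop t hu)
    have h2 : Tendsto (fun k => L (φ (u k + t) x)) atTop (nhds (L (φ t y))) :=
      ((hLcont _ hmemint).tendsto).comp (hD t).2
    exact tendsto_nhds_unique h2 h1
  -- conclude: the full orbit of `y` is an invariant subset of `Eset`
  rw [hM]
  refine ⟨{z | ∃ t : ℝ, z = φ t y}, ⟨?_, ?_⟩, ⟨0, (hφ0 y).symm⟩⟩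
  · rintro _ ⟨t, rfl⟩
    have hzint : φ t y ∈ interior U :=
      hB' (Metric.closedBall_subset_closedBall hεε'.le (hD t).1)
    rw [hEset]
    refine ⟨interior_subset hzint, ?_⟩
    have hder : HasDerivAt (fun s => L (φ s (φ t y))) ⟪gradient L (φ t y), f (φ t y)⟫ 0 :=
      hLD (φ t y) hzint (φ t y) 0 (hφ0 _)
    have hconst : (fun s => L (φ s (φ t y))) = fun _ => el := by
      funext s
      rw [hgroup y s t]
      exact hLy (t + s)
    rw [hconst] at hder
    exact hder.unique (hasDerivAt_const 0 el)
  · rintro _ ⟨t, rfl⟩ s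
    exact ⟨t + s, hgroup y s t⟩
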